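/- Let S ⊂ ℝⁿ be a bounded set, let x₀ ∈ S, and let ν ∈ ℝⁿ be a unit vector such that ⟨ν, x − x₀⟩ ≤ 0 for all x ∈ S (i.e. ν is the outer normal of a hyperplane supporting S at x₀). Suppose ⟨ν, e₁⟩ ≥ 1/2 and ‖ν − ⟨ν,e₁⟩ e₁‖ ≤ s. Then every x ∈ S satisfies ⟨x, e₁⟩ ≤ ⟨x₀, e₁⟩ + 2 s · diam(S). -/
import Mathlib


open RealInnerProductSpace

noncomputable section

/-- **Supporting hyperplane with almost-axial normal.** If a bounded set `S` has at
`x₀ ∈ S` a supporting hyperplane with unit outer normal `ν` satisfying `⟨ν,e₁⟩ ≥ 1/2`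
and `‖ν - ⟨ν,e₁⟩e₁‖ ≤ s`, then every `x ∈ S` has `⟨x,e₁⟩ ≤ ⟨x₀,e₁⟩ + 2 s diam S`. -/
theorem support_plane_slab {n : ℕ} (hn : 1 ≤ n)
    (S : Set (EuclideanSpace ℝ (Fin n))) (hSbdd : Bornology.IsBounded S)
    (x₀ : EuclideanSpace ℝ (Fin n)) (hx₀ : x₀ ∈ S)
    (ν : EuclideanSpace ℝ (Fin n)) (hν : ‖ν‖ = 1)
    (hsupport : ∀ x ∈ S, ⟪ν, x - x₀⟫ ≤ 0)
    (e₁ : EuclideanSpace ℝ (Fin n)) (he₁ : e₁ = EuclideanSpace.single ⟨0, hn⟩ 1)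
    (hν₁ : 1 / 2 ≤ ⟪ν, e₁⟫)
    (s : ℝ) (hs : ‖ν - ⟪ν, e₁⟫ • e₁‖ ≤ s) :
    ∀ x ∈ S, ⟪x, e₁⟫ ≤ ⟪x₀, e₁⟫ + 2 * s * Metric.diam S := by
  intro x hx
  set ν₁ : ℝ := ⟪ν, e₁⟫ with hν₁def
  set w : EuclideanSpace ℝ (Fin n) := ν - ν₁ • e₁ with hw
  have hdecomp : ⟪ν, x - x₀⟫ = ⟪w, x - x₀⟫ + ν₁ * ⟪e₁, x - x₀⟫ := by
    simp [hw, inner_sub_left, inner_smul_left]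
  have h1 : ν₁ * ⟪e₁, x - x₀⟫ ≤ -⟪w, x - x₀⟫ := by
    have := hsupport x hx
    linarith [hdecomp ▸ this]
  have h2 : -⟪w, x - x₀⟫ ≤ ‖w‖ * ‖x - x₀‖ := by
    have := abs_real_inner_le_norm w (x - x₀)
    have := neg_abs_le (⟪w, x - x₀⟫ : ℝ)
    linarith
  have hdist : ‖x - x₀‖ ≤ Metric.diam S := by
    have := Metric.dist_le_diam_of_mem hSbdd hx hx₀
    rwa [dist_eq_norm] at this
  have hwnn : (0:ℝ) ≤ ‖w‖ := norm_nonneg _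
  have hsnn : (0:ℝ) ≤ s := le_trans hwnn hs
  have h3 : ‖w‖ * ‖x - x₀‖ ≤ s * Metric.diam S :=
    mul_le_mul hs hdist (norm_nonneg _) hsnn
  have h4 : ν₁ * ⟪e₁, x - x₀⟫ ≤ s * Metric.diam S := by linarith
  have hhalf : (1/2 : ℝ) * ⟪e₁, x - x₀⟫ ≤ s * Metric.diam S := by
    rcases le_or_gt ⟪e₁, x - x₀⟫ 0 with h | h
    · nlinarith [Metric.diam_nonneg (s := S)]
    · nlinarith
  have : ⟪e₁, x - x₀⟫ ≤ 2 * s * Metric.diam S := by linarith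
  have hsym : ⟪e₁, x - x₀⟫ = ⟪x, e₁⟫ - ⟪x₀, e₁⟫ := by
    rw [real_inner_comm, inner_sub_left]
  linarith [hsym ▸ this]
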